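/- Let M be a twisted homotopical category and H a bimonoid in M such that 𝓟H admits a monoid structure with respect to which its right ΩH-action, its left H-coaction, and the morphisms i_H: ΩH → 𝓟H and p_H: 𝓟H → H of the classifying bundle ξ(H) are all monoid morphisms. Then for every bimonoid map g: H' → H, the induced morphism ι_g: H ∖̃ H' → H' is a monoid morphism. -/

import Mathlib

/-!
Statement 18 (Remark 2.10 of Farjoun–Hess, "Normal and conormal maps in homotopy theory").

Let `M` be a (braided) monoidal category underlying a twisted homotopical category and `H` a
bimonoid in `M` such that `𝓟H` admits a monoid structure with respect to which its right
`ΩH`-action, its left `H`-coaction, and the morphisms `i_H : ΩH ⟶ 𝓟H` and `p_H : 𝓟H ⟶ H` of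
the classifying bundle `ξ(H)` are all monoid morphisms.  Then for every bimonoid map
`g : H' ⟶ H`, the induced morphism `ι_g : H ∖̃ H' ⟶ H'` is a monoid morphism.

Here the Borel kernel `H ∖̃ H' = H' □_H 𝓟H` is the cotensor product (an equalizer), `H'` being
a right `H`-comodule via `g`, and `ι_g = H' □_H p_H`, which is computed as the composite of the
equalizer inclusion `H ∖̃ H' ⟶ H' ⊗ 𝓟H` with `H' ◁ (p_H ≫ ε_H)` and the right unitor.
The hypothesis that the action, coaction, `i_H` and `p_H` are monoid morphisms is expressed by
letting `ΩH` and `𝓟H` be monoid objects (`Mon_ M`), letting `i_H`, `p_H`, the action and the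
coaction be morphisms of monoids (morphisms in `Mon_ M`, using the tensor product of monoids
available since `M` is braided, and using the monoid structure on `H` underlying its bimonoid
structure).  The conclusion produces a multiplication and unit on `H ∖̃ H'` making it a monoid
in `M` such that `ι_g` is a morphism of monoids.
-/

open CategoryTheory MonoidalCategory Limits

universe v u

theorem normal_conormal_stmt18
    {M : Type u} [Category.{v} M] [MonoidalCategory M] [BraidedCategory M]
    [HasEqualizers M]
    -- bimonoids `H`, `H'` and a bimonoid map `g : H' ⟶ H`
    (H H' : Bimon M) (g : H' ⟶ H)
    -- the classifying bundle `ξ(H) = (ΩH ⟶ 𝓟H ⟶ H)`, where `𝓟H` admits a monoid structure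
    -- such that `i_H` and `p_H` are monoid morphisms:
    (Om P : Mon M) (i : Om ⟶ P) (p : P ⟶ H.X)
    -- the right `ΩH`-action on `𝓟H`, as a monoid morphism (`P ⊗ Om` is a monoid since `M`
    -- is braided):
    (ρA : P ⊗ Om ⟶ P)
    (act_unit : (P.X ◁ Om.mon.one) ≫ ρA.hom = (ρ_ P.X).hom)
    (act_assoc : (P.X ◁ Om.mon.mul) ≫ ρA.hom =
      (α_ P.X Om.X Om.X).inv ≫ (ρA.hom ▷ Om.X) ≫ ρA.hom)
    -- `i_H` is equivariant: `i_H` is a map of right `ΩH`-modules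
    (i_equiv : (i.hom ▷ Om.X) ≫ ρA.hom = Om.mon.mul ≫ i.hom)
    -- the left `H`-coaction on `𝓟H`, as a monoid morphism:
    (lam : P ⟶ H.X ⊗ P)
    (coact_counit : lam.hom ≫ (H.comon.counit.hom ▷ P.X) ≫ (λ_ P.X).hom = 𝟙 P.X)
    (coact_coassoc : lam.hom ≫ (H.comon.comul.hom ▷ P.X) ≫ (α_ H.X.X H.X.X P.X).hom =
      lam.hom ≫ (H.X.X ◁ lam.hom))
    -- `p_H` is a map of left `H`-comodules
    (p_coact : lam.hom ≫ (H.X.X ◁ p.hom) = p.hom ≫ H.comon.comul.hom) :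
    -- Conclusion: `ι_g : H ∖̃ H' ⟶ H'` is a monoid morphism, for the monoid structure
    -- inherited by the Borel kernel `H ∖̃ H' = H' □_H 𝓟H`.
    ∀ (K : M) (ι : K ⟶ H'.X.X ⊗ P.X)
      (hcomm : ι ≫ (((H'.comon.comul.hom ≫ (H'.X.X ◁ g.hom.hom)) ▷ P.X) ≫
          (α_ H'.X.X H.X.X P.X).hom) = ι ≫ (H'.X.X ◁ lam.hom))
      (_ : IsLimit (Fork.ofι ι hcomm)),
      ∃ (mulK : K ⊗ K ⟶ K) (oneK : 𝟙_ M ⟶ K),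
        (oneK ▷ K) ≫ mulK = (λ_ K).hom ∧
        (K ◁ oneK) ≫ mulK = (ρ_ K).hom ∧
        (mulK ▷ K) ≫ mulK = (α_ K K K).hom ≫ (K ◁ mulK) ≫ mulK ∧
        -- `ι_g = (H' □_H p_H)` is a monoid morphism:
        mulK ≫ (ι ≫ (H'.X.X ◁ (p.hom ≫ H.comon.counit.hom)) ≫ (ρ_ H'.X.X).hom) =
          (((ι ≫ (H'.X.X ◁ (p.hom ≫ H.comon.counit.hom)) ≫ (ρ_ H'.X.X).hom)) ⊗ₘ
            ((ι ≫ (H'.X.X ◁ (p.hom ≫ H.comon.counit.hom)) ≫ (ρ_ H'.X.X).hom))) ≫ H'.X.mon.mul ∧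
        oneK ≫ (ι ≫ (H'.X.X ◁ (p.hom ≫ H.comon.counit.hom)) ≫ (ρ_ H'.X.X).hom) = H'.X.mon.one := by
  intro K ι hcomm hlim
  -- Package the two parallel morphisms of the defining fork as morphisms of monoids
  -- (this uses that `H'.comul`, `g.hom`, `lam`, `p`, `H.counit` are all monoid morphisms).
  let T : Mon M := H'.X ⊗ P
  let S : Mon M := H'.X ⊗ (H.X ⊗ P)
  let ubar : T ⟶ S := ((H'.comon.comul ≫ (H'.X ◁ g.hom)) ▷ P) ≫ (α_ H'.X H.X P).hom
  let vbar : T ⟶ S := H'.X ◁ lam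
  let w : T ⟶ H'.X := (H'.X ◁ (p ≫ H.comon.counit)) ≫ (ρ_ H'.X).hom
  have hu : ubar.hom =
      (((H'.comon.comul.hom ≫ (H'.X.X ◁ g.hom.hom)) ▷ P.X) ≫ (α_ H'.X.X H.X.X P.X).hom) := by
    simp [ubar]
  have hv : vbar.hom = H'.X.X ◁ lam.hom := by simp [vbar]
  have hw : w.hom = (H'.X.X ◁ (p.hom ≫ H.comon.counit.hom)) ≫ (ρ_ H'.X.X).hom := by
    simp [w]
  have hio : ι ≫ ubar.hom = ι ≫ vbar.hom := by
    rw [hu, hv]; simpa using hcomm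
  -- The candidate multiplication and unit equalize the fork:
  have hfm : ((ι ⊗ₘ ι) ≫ T.mon.mul) ≫ ubar.hom = ((ι ⊗ₘ ι) ≫ T.mon.mul) ≫ vbar.hom := by
    rw [Category.assoc, Category.assoc, IsMonHom.mul_hom ubar.hom, IsMonHom.mul_hom vbar.hom,
      ← Category.assoc, ← Category.assoc, tensorHom_comp_tensorHom, tensorHom_comp_tensorHom, hio]
  have hfo : T.mon.one ≫ ubar.hom = T.mon.one ≫ vbar.hom := by
    rw [IsMonHom.one_hom ubar.hom, IsMonHom.one_hom vbar.hom]
  rw [hu, hv] at hfm hfo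
  -- lift them along the equalizer
  obtain ⟨mulK, hmulK⟩ := Fork.IsLimit.lift' hlim ((ι ⊗ₘ ι) ≫ T.mon.mul) hfm
  obtain ⟨oneK, honeK⟩ := Fork.IsLimit.lift' hlim T.mon.one hfo
  simp only [Fork.ι_ofι] at hmulK honeK
  have hmono : ∀ {Z : M} (a b : Z ⟶ K), a ≫ ι = b ≫ ι → a = b := by
    intro Z a b hab
    exact Fork.IsLimit.hom_ext hlim (by simpa using hab)
  -- exchange lemmas
  have hTX : T.X = H'.X.X ⊗ P.X := rfl
  -- exchange lemmas
  have e1 : (mulK ▷ K) ≫ (ι ⊗ₘ ι) = ((ι ⊗ₘ ι) ⊗ₘ ι) ≫ (T.mon.mul ▷ T.X) := by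
    simp only [hTX, ← tensorHom_id, tensorHom_comp_tensorHom, hmulK, Category.id_comp, Category.comp_id]
    simp [T]
  have e2 : (K ◁ mulK) ≫ (ι ⊗ₘ ι) = (ι ⊗ₘ (ι ⊗ₘ ι)) ≫ (T.X ◁ T.mon.mul) := by
    simp only [hTX, ← id_tensorHom, tensorHom_comp_tensorHom, hmulK, Category.id_comp, Category.comp_id]
    simp [T]
  have eL : (oneK ▷ K) ≫ (ι ⊗ₘ ι) = (𝟙_ M ◁ ι) ≫ (T.mon.one ▷ T.X) := by
    simp only [hTX, ← tensorHom_id, ← id_tensorHom, tensorHom_comp_tensorHom, honeK,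
      Category.id_comp, Category.comp_id]
    simp [T]
  have eR : (K ◁ oneK) ≫ (ι ⊗ₘ ι) = (ι ▷ 𝟙_ M) ≫ (T.X ◁ T.mon.one) := by
    simp only [hTX, ← tensorHom_id, ← id_tensorHom, tensorHom_comp_tensorHom, honeK,
      Category.id_comp, Category.comp_id]
    simp [T]
  have ha : ((ι ⊗ₘ ι) ⊗ₘ ι) ≫ (α_ T.X T.X T.X).hom = (α_ K K K).hom ≫ (ι ⊗ₘ (ι ⊗ₘ ι)) :=
    associator_naturality ι ι ι
  refine ⟨mulK, oneK, ?_, ?_, ?_, ?_, ?_⟩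
  · -- left unit law
    apply hmono
    rw [Category.assoc, hmulK, reassoc_of% eL, MonObj.one_mul T.X]
    exact leftUnitor_naturality ι
  · -- right unit law
    apply hmono
    rw [Category.assoc, hmulK, reassoc_of% eR, MonObj.mul_one T.X]
    exact rightUnitor_naturality ι
  · -- associativity
    apply hmono
    simp only [Category.assoc]
    rw [hmulK, reassoc_of% e1, reassoc_of% e2, MonObj.mul_assoc T.X, reassoc_of% ha]
  · -- `ι_g` is compatible with the multiplications
    have goal_eq : ι ≫ (H'.X.X ◁ (p.hom ≫ H.comon.counit.hom)) ≫ (ρ_ H'.X.X).hom =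
        ι ≫ w.hom := by rw [hw]
    rw [goal_eq, ← Category.assoc, hmulK, Category.assoc, IsMonHom.mul_hom w.hom,
      ← Category.assoc, tensorHom_comp_tensorHom]
  · -- `ι_g` is compatible with the units
    have goal_eq : ι ≫ (H'.X.X ◁ (p.hom ≫ H.comon.counit.hom)) ≫ (ρ_ H'.X.X).hom =
        ι ≫ w.hom := by rw [hw]
    rw [goal_eq, ← Category.assoc, honeK, IsMonHom.one_hom w.hom]
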